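/- Let X be a set, k ≥ 3, and E ⊆ X^k a k-ary relation. For 3 ≤ j ≤ k, e ∈ X^{k−j}, and b ∈ X, let S^e_b = {(t₁,…,t_{j−1}) ∈ X^{j−1} : (t₁,…,t_{j−1},b,e) ∈ E}. Assume: (a) there are constants C₃, C₄ ≥ 1 such that for all 3 ≤ j ≤ k, all e ∈ X^{k−j}, and all finite D ⊆ X^{j−1}, the number of distinct sets D ∩ S^e_b with b ∈ X is at most C₃·|D|^{C₄}; and (b) there are c ≥ 1 and n₀ ∈ ℕ such that for all n ≥ n₀ and all e ∈ X^{k−2}, every sequence in X of length at least n^c contains a subsequence of length n that is indiscernible with respect to the binary relation {(x,y) ∈ X² : (x,y,e) ∈ E}. Then there exist c' > 0 and n₁ ∈ ℕ such that for all n ≥ n₁, every sequence in X of length at least twr_{k−1}(n^{c'}) contains an E-indiscernible subsequence of length n. (This is the combinatorial content of the paper's tower-bound theorem for k-ary relations in NIP structures.) -/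

import Mathlib

open scoped Classical

/-- A finite sequence `a` is `E`-indiscernible for a `k`-ary relation `E` if `E` holds on all
increasing `k`-tuples from the sequence, or fails on all of them. -/
def IsIndiscernible {X : Type*} {k m : ℕ} (E : (Fin k → X) → Prop) (a : Fin m → X) : Prop :=
  (∀ s : Fin k → Fin m, StrictMono s → E (a ∘ s)) ∨
  (∀ s : Fin k → Fin m, StrictMono s → ¬ E (a ∘ s))

/-- The tower function: `Twr 0 x = x` and `Twr (i+1) x = 2^(Twr i x)`; so `Twr i` is the
paper's `twr_{i+1}` (with `twr₁(x) = x`). -/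
noncomputable def Twr : ℕ → ℝ → ℝ
  | 0, x => x
  | i + 1, x => (2 : ℝ) ^ (Twr i x)

/-! ### Pointwise descriptions of `Fin.append`, `Fin.snoc`, `Fin.cons` -/

lemma append_apply' {α : Sort*} {p q : ℕ} (u : Fin p → α) (v : Fin q → α) (i : Fin (p + q)) :
    Fin.append u v i = if h : (i : ℕ) < p then u ⟨i, h⟩ else v ⟨(i : ℕ) - p, by omega⟩ := by
  by_cases h : (i : ℕ) < p
  · have : i = Fin.castAdd q ⟨(i : ℕ), h⟩ := by ext; simp
    rw [this, Fin.append_left]; simp [h]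
  · have : i = Fin.natAdd p ⟨(i : ℕ) - p, by omega⟩ := by ext; simp; omega
    rw [this, Fin.append_right]; simp [h]

lemma snoc_apply' {α : Sort*} {p : ℕ} (u : Fin p → α) (b : α) (i : Fin (p + 1)) :
    (Fin.snoc u b : Fin (p + 1) → α) i = if h : (i : ℕ) < p then u ⟨i, h⟩ else b := by
  by_cases h : (i : ℕ) < p
  · have : i = Fin.castSucc ⟨(i : ℕ), h⟩ := by ext; simp
    rw [this, Fin.snoc_castSucc]; simp [h]
  · have : i = Fin.last p := by ext; simp; omega
    rw [this, Fin.snoc_last]; simp [h]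

lemma cons_apply' {α : Sort*} {p : ℕ} (b : α) (u : Fin p → α) (i : Fin (p + 1)) :
    (Fin.cons b u : Fin (p + 1) → α) i = if h : 0 < (i : ℕ) then u ⟨(i : ℕ) - 1, by omega⟩ else b := by
  by_cases h : 0 < (i : ℕ)
  · have : i = Fin.succ ⟨(i : ℕ) - 1, by omega⟩ := by ext; simp; omega
    rw [this, Fin.cons_succ]; simp [h]
  · have : i = 0 := by ext; simp only [Fin.coe_ofNat_eq_mod, Nat.zero_mod]; omega
    rw [this, Fin.cons_zero]; simp [h]

/-! ### Elementary facts about the tower function -/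

lemma Twr_succ (d : ℕ) (x : ℝ) : Twr (d + 1) x = (2 : ℝ) ^ (Twr d x) := rfl

lemma two_le_Twr (d : ℕ) {x : ℝ} (hx : 2 ≤ x) : 2 ≤ Twr d x := by
  induction d with
  | zero => exact hx
  | succ d ih =>
    calc (2:ℝ) = 2 ^ (1:ℝ) := (Real.rpow_one 2).symm
    _ ≤ 2 ^ (Twr d x) := Real.rpow_le_rpow_of_exponent_le one_le_two (by linarith)

lemma le_two_rpow {y : ℝ} (hy : 1 ≤ y) : y ≤ (2:ℝ) ^ y := by
  have := one_add_mul_self_le_rpow_one_add (by norm_num : (-1:ℝ) ≤ 1) hy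
  simp only [mul_one] at this
  have h2 : (1:ℝ) + 1 = 2 := by norm_num
  rw [h2] at this
  linarith

lemma nat_le_two_pow_real (q : ℕ) : (q : ℝ) ≤ 2 ^ q := by
  exact_mod_cast (Nat.lt_two_pow_self (n := q)).le

/-- The tower function absorbs multiplication by constants into a power of the argument. -/
lemma Twr_mul_le (d : ℕ) {q : ℕ} (hq : 2 ≤ q) {x : ℝ} (hx : 2 ≤ x) :
    (q : ℝ) * Twr d x ≤ Twr d (x ^ q) := by
  induction d with
  | zero =>
    show (q:ℝ) * x ≤ x ^ q
    have h1 : (q : ℝ) ≤ x ^ (q - 1) := by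
      calc (q:ℝ) ≤ 2 ^ (q-1) := by
            exact_mod_cast Nat.le_of_lt_succ (by
              have := Nat.lt_two_pow_self (n := q-1)
              omega)
      _ ≤ x ^ (q-1) := pow_le_pow_left₀ (by norm_num) hx _
    calc (q:ℝ) * x ≤ x ^ (q-1) * x := by nlinarith
    _ = x ^ q := by rw [← pow_succ]; congr 1; omega
  | succ d ih =>
    set T := Twr d x with hT
    have hT2 : 2 ≤ T := two_le_Twr d hx
    show (q:ℝ) * 2 ^ T ≤ 2 ^ (Twr d (x ^ q))
    have h1 : (q:ℝ) * 2 ^ T ≤ 2 ^ ((q:ℝ) + T) := by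
      rw [Real.rpow_add (by norm_num)]
      have : (q:ℝ) ≤ (2:ℝ) ^ ((q:ℝ)) := by
        calc (q:ℝ) ≤ (2:ℝ)^(q:ℕ) := nat_le_two_pow_real q
        _ = (2:ℝ) ^ ((q:ℝ)) := (Real.rpow_natCast 2 q).symm
      nlinarith [Real.rpow_pos_of_pos (by norm_num : (0:ℝ) < 2) T]
    have hq2 : (2:ℝ) ≤ (q:ℝ) := by exact_mod_cast hq
    have h2 : (q:ℝ) + T ≤ (q:ℝ) * T := by nlinarith
    calc (q:ℝ) * 2 ^ T ≤ 2 ^ ((q:ℝ) + T) := h1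
    _ ≤ 2 ^ ((q:ℝ) * T) := Real.rpow_le_rpow_of_exponent_le one_le_two h2
    _ ≤ 2 ^ (Twr d (x ^ q)) := Real.rpow_le_rpow_of_exponent_le one_le_two ih

/-- The tower function absorbs polynomial growth into a power of the argument. -/
lemma Twr_pow_le (d : ℕ) {p : ℕ} (hp : 1 ≤ p) {x : ℝ} (hx : 2 ≤ x) :
    (Twr d x + 2) ^ p ≤ Twr d (x ^ (2*p+2)) := by
  induction d with
  | zero =>
    show (x + 2) ^ p ≤ x ^ (2*p+2)
    calc (x + 2) ^ p ≤ (x * x) ^ p := by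
          apply pow_le_pow_left₀ (by linarith)
          nlinarith
    _ = x ^ (2*p) := by rw [← sq, ← pow_mul, Nat.mul_comm]
    _ ≤ x ^ (2*p+2) := pow_le_pow_right₀ (by linarith) (by omega)
  | succ d ih =>
    set T := Twr d x with hT
    have hT2 : 2 ≤ T := two_le_Twr d hx
    have h2T : (0:ℝ) < 2 ^ T := Real.rpow_pos_of_pos (by norm_num) T
    show ((2:ℝ) ^ T + 2) ^ p ≤ 2 ^ (Twr d (x ^ (2*p+2)))
    have step1 : ((2:ℝ) ^ T + 2) ^ p ≤ ((2:ℝ) ^ (T+1)) ^ p := by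
      apply pow_le_pow_left₀ (by positivity)
      rw [Real.rpow_add (by norm_num), Real.rpow_one]
      have : (2:ℝ) ≤ 2 ^ T := by
        calc (2:ℝ) = 2 ^ (1:ℝ) := (Real.rpow_one 2).symm
        _ ≤ 2 ^ T := Real.rpow_le_rpow_of_exponent_le one_le_two (by linarith)
      linarith
    have step2 : ((2:ℝ) ^ (T+1)) ^ p = (2:ℝ) ^ ((T+1) * (p:ℝ)) := by
      rw [← Real.rpow_natCast ((2:ℝ) ^ (T+1)) p, ← Real.rpow_mul (by norm_num)]
    have step3 : (T+1) * (p:ℝ) ≤ ((2*p+2 : ℕ) : ℝ) * T := by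
      have hp1 : (1:ℝ) ≤ (p:ℝ) := by exact_mod_cast hp
      push_cast
      nlinarith
    calc ((2:ℝ) ^ T + 2) ^ p ≤ (2:ℝ) ^ ((T+1) * (p:ℝ)) := by rw [← step2]; exact step1
    _ ≤ (2:ℝ) ^ (((2*p+2 : ℕ) : ℝ) * T) := Real.rpow_le_rpow_of_exponent_le one_le_two step3
    _ ≤ (2:ℝ) ^ (Twr d (x ^ (2*p+2))) :=
        Real.rpow_le_rpow_of_exponent_le one_le_two (Twr_mul_le d (by omega) hx)


/-- auxiliary: value of `F` on the tuple given by positions `t` in list `L`, with last entry `b`. -/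
def erVal {X : Type*} {r m N : ℕ} (F : (Fin (r+1) → X) → Prop) (a : Fin N → X) (d0 : Fin N)
    (L : List (Fin N)) (t : Fin r → Fin m) (b : Fin N) : Prop :=
  F (Fin.snoc (fun q => a (L.getD (t q) d0)) (a b))

/-- end-homogeneity property of a list of indices. -/
def erQ {X : Type*} {r m N : ℕ} (F : (Fin (r+1) → X) → Prop) (a : Fin N → X) (d0 : Fin N)
    (L : List (Fin N)) : Prop :=
  ∀ (t : Fin r → Fin m) (w w' : ℕ), w < L.length → w' < L.length →
    (∀ q, ((t q : ℕ) < w)) → (∀ q, ((t q : ℕ) < w')) →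
    (erVal F a d0 L t (L.getD w d0) ↔ erVal F a d0 L t (L.getD w' d0))

lemma er_ext {X : Type*} {r m N : ℕ} (F : (Fin (r+1) → X) → Prop) (a : Fin N → X) (d0 : Fin N)
    (d : ℕ) :
    ∀ (L : List (Fin N)) (S : Finset (Fin N)),
    L.length + d ≤ m →
    L.Pairwise (· < ·) →
    (∀ b ∈ S, ∀ x ∈ L, x < b) →
    (∀ b ∈ S, ∀ b' ∈ S, ∀ t : Fin r → Fin m, (∀ q, ((t q : ℕ) < L.length)) →
      (erVal F a d0 L t b ↔ erVal F a d0 L t b')) →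
    (∀ w : ℕ, w < L.length → ∀ b ∈ S, ∀ t : Fin r → Fin m, (∀ q, ((t q : ℕ) < w)) →
      (erVal F a d0 L t (L.getD w d0) ↔ erVal F a d0 L t b)) →
    erQ (m := m) F a d0 L →
    d * 2 ^ (m ^ r * d) ≤ S.card →
    ∃ M : List (Fin N), M.length = d ∧ (L ++ M).Pairwise (· < ·) ∧ erQ (m := m) F a d0 (L ++ M) := by
  induction d with
  | zero =>
    intro L S _ hsort _ _ _ hQ _
    exact ⟨[], rfl, by simpa using hsort, by simpa using hQ⟩
  | succ d IH =>
    intro L S hlen hsort hlt hom hom2 hQ hcard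
    have hSne : S.Nonempty := by
      rw [← Finset.card_pos]
      have : 1 ≤ (d+1) * 2 ^ (m ^ r * (d+1)) :=
        Nat.one_le_iff_ne_zero.mpr (by positivity)
      omega
    set b := S.min' hSne with hb
    have hbmem : b ∈ S := S.min'_mem hSne
    set L' := L ++ [b] with hL'
    have hbL : ∀ x ∈ L, x < b := fun x hx => hlt b hbmem x hx
    have hlen' : L'.length = L.length + 1 := by simp [hL']
    -- classification map
    set φ : Fin N → ((Fin r → Fin m) → Bool) :=
      fun z t => decide (erVal F a d0 L' t z) with hφ
    -- pigeonhole
    have hcards : Fintype.card ((Fin r → Fin m) → Bool) = 2 ^ (m ^ r) := by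
      simp [Fintype.card_fun]
    have key : (Finset.univ : Finset ((Fin r → Fin m) → Bool)).card
        * (d * 2 ^ (m ^ r * d)) ≤ (S.erase b).card := by
      rw [Finset.card_univ, hcards, Finset.card_erase_of_mem hbmem]
      have e0 : m ^ r * (d+1) = m ^ r * d + m ^ r := by ring
      rw [e0, pow_add] at hcard
      have hC : 1 ≤ 2 ^ (m ^ r * d) := Nat.one_le_two_pow
      have hB : 1 ≤ 2 ^ (m ^ r) := Nat.one_le_two_pow
      have : 2 ^ (m ^ r) * (d * 2 ^ (m ^ r * d)) + 1 ≤ S.card := by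
        calc 2 ^ (m ^ r) * (d * 2 ^ (m ^ r * d)) + 1
            ≤ (d+1) * (2 ^ (m ^ r * d) * 2 ^ (m ^ r)) := by nlinarith
          _ ≤ S.card := hcard
      omega
    obtain ⟨y, -, hfib⟩ := Finset.exists_le_card_fiber_of_mul_le_card_of_maps_to
      (fun z _ => Finset.mem_univ (φ z)) Finset.univ_nonempty key
    set S' := (S.erase b).filter (fun z => φ z = y) with hS'
    have hS'S : S' ⊆ S := fun z hz => Finset.mem_of_mem_erase (Finset.mem_filter.mp hz).1
    have hblt : ∀ z ∈ S', b < z := by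
      intro z hz
      have hzne : z ≠ b := (Finset.mem_erase.mp (Finset.mem_filter.mp hz).1).1
      exact lt_of_le_of_ne (S.min'_le z (hS'S hz)) (Ne.symm hzne)
    have hgetD : ∀ j : ℕ, j < L.length → L'.getD j d0 = L.getD j d0 := by
      intro j hj
      rw [hL', List.getD_append _ _ _ _ hj]
    have hgetDb : L'.getD L.length d0 = b := by
      rw [hL', List.getD_append_right _ _ _ _ le_rfl]
      simp
    have hvalEq : ∀ t : Fin r → Fin m, (∀ q, ((t q : ℕ) < L.length)) → ∀ z,
        erVal F a d0 L' t z = erVal F a d0 L t z := by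
      intro t ht z
      unfold erVal
      have : (fun q => a (L'.getD (t q) d0)) = (fun q => a (L.getD (t q) d0)) :=
        funext fun q => by rw [hgetD _ (ht q)]
      rw [this]
    try rfl
    have hφiff : ∀ z₁ ∈ S', ∀ z₂ ∈ S', ∀ t : Fin r → Fin m,
        (erVal F a d0 L' t z₁ ↔ erVal F a d0 L' t z₂) := by
      intro z₁ h₁ z₂ h₂ t
      have e1 : φ z₁ = y := (Finset.mem_filter.mp h₁).2
      have e2 : φ z₂ = y := (Finset.mem_filter.mp h₂).2
      have := congrFun (e1.trans e2.symm) t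
      simpa [hφ, decide_eq_decide] using this
    -- apply IH
    obtain ⟨M', hM'len, hsort'', hQ''⟩ := IH L' S'
      (by omega)
      (by
        rw [hL']
        refine List.pairwise_append.mpr ⟨hsort, List.pairwise_singleton _ _, ?_⟩
        intro x hx y' hy'
        simp at hy'
        subst hy'
        exact hbL x hx)
      (by
        intro z hz x hx
        rw [hL', List.mem_append] at hx
        rcases hx with hx | hx
        · exact hlt z (hS'S hz) x hx
        · simp at hx; subst hx; exact hblt z hz)
      (by
        intro z₁ h₁ z₂ h₂ t _
        exact hφiff z₁ h₁ z₂ h₂ t)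
      (by
        -- hom2 for L'
        intro w hw z hzS' t ht
        rw [hlen'] at hw
        rcases Nat.lt_or_ge w L.length with hwL | hwL
        · have htL : ∀ q, ((t q : ℕ) < L.length) := fun q => lt_trans (ht q) hwL
          rw [hvalEq t htL, hvalEq t htL, hgetD w hwL]
          exact hom2 w hwL z (hS'S hzS') t ht
        · have hwEq : w = L.length := by omega
          subst hwEq
          rw [hvalEq t ht, hvalEq t ht, hgetDb]
          exact hom b hbmem z (hS'S hzS') t ht)
      (by
        -- Q for L'
        intro t w w' hw hw' htw htw'
        rw [hlen'] at hw hw'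
        rcases Nat.lt_or_ge w L.length with hwL | hwL <;>
          rcases Nat.lt_or_ge w' L.length with hw'L | hw'L
        · have htL : ∀ q, ((t q : ℕ) < L.length) := fun q => lt_trans (htw q) hwL
          rw [hvalEq t htL, hvalEq t htL, hgetD w hwL, hgetD w' hw'L]
          exact hQ t w w' hwL hw'L htw htw'
        · have hw'Eq : w' = L.length := by omega
          subst hw'Eq
          have htL : ∀ q, ((t q : ℕ) < L.length) := fun q => lt_trans (htw q) hwL
          rw [hvalEq t htL, hvalEq t htL, hgetD w hwL, hgetDb]
          exact hom2 w hwL b hbmem t htw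
        · have hwEq : w = L.length := by omega
          subst hwEq
          have htL : ∀ q, ((t q : ℕ) < L.length) := fun q => lt_trans (htw' q) hw'L
          rw [hvalEq t htL, hvalEq t htL, hgetDb, hgetD w' hw'L]
          exact (hom2 w' hw'L b hbmem t htw').symm
        · have : w = w' := by omega
          subst this
          exact Iff.rfl)
      (by
        exact hfib)
    refine ⟨b :: M', by simp [hM'len], ?_, ?_⟩
    · rwa [List.append_cons]
    · rwa [List.append_cons]

lemma er_step {X : Type*} {r : ℕ} (hr : 1 ≤ r) (F : (Fin (r+1) → X) → Prop)
    (m N : ℕ) (hm : 1 ≤ m) (hN : m * 2 ^ (m ^ r * m) ≤ N) (a : Fin N → X) :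
    ∃ s : Fin m → Fin N, StrictMono s ∧
      ∀ u v : Fin (r+1) → Fin m, StrictMono u → StrictMono v →
        (∀ i : Fin r, u i.castSucc = v i.castSucc) →
        (F (a ∘ s ∘ u) ↔ F (a ∘ s ∘ v)) := by
  have hN0 : 0 < N := by
    have : 1 ≤ m * 2 ^ (m ^ r * m) := Nat.one_le_iff_ne_zero.mpr (by positivity)
    omega
  set d0 : Fin N := ⟨0, hN0⟩ with hd0
  obtain ⟨M, hMlen, hMsort, hMQ⟩ := er_ext (m := m) F a d0 m [] Finset.univ
    (by simp)
    (List.Pairwise.nil)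
    (by simp)
    (by
      intro b _ b' _ t ht
      exact absurd (ht ⟨0, hr⟩) (by simp))
    (by intro w hw; simp at hw)
    (by intro t w w' hw hw'; simp at hw)
    (by simpa using hN)
  rw [List.nil_append] at hMsort hMQ
  set s : Fin m → Fin N := fun q => M.getD q d0 with hs
  have hsget : ∀ q : Fin m, s q = M.get ⟨q, by rw [hMlen]; exact q.isLt⟩ := by
    intro q
    rw [hs]
    exact List.getD_eq_get M d0 ⟨q, by rw [hMlen]; exact q.isLt⟩
  have hsmono : StrictMono s := by
    intro i j hij
    rw [hsget i, hsget j]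
    exact List.Pairwise.rel_get_of_lt hMsort (by simpa using hij)
  refine ⟨s, hsmono, ?_⟩
  intro u v hu hv hagree
  have hdecomp : ∀ w : Fin (r+1) → Fin m,
      a ∘ s ∘ w = Fin.snoc (fun q : Fin r => a (s (w q.castSucc))) (a (s (w (Fin.last r)))) := by
    intro w
    funext i
    refine Fin.lastCases ?_ ?_ i
    · simp
    · intro q; simp
  set t : Fin r → Fin m := fun q => u q.castSucc with ht
  have hQres := hMQ t (u (Fin.last r) : ℕ) (v (Fin.last r) : ℕ)
    (by rw [hMlen]; exact (u (Fin.last r)).isLt)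
    (by rw [hMlen]; exact (v (Fin.last r)).isLt)
    (fun q => hu (Fin.castSucc_lt_last q))
    (fun q => by rw [ht]; simp only []; rw [hagree q]; exact hv (Fin.castSucc_lt_last q))
  have e1 : erVal F a d0 M t (M.getD (u (Fin.last r) : ℕ) d0) = F (a ∘ s ∘ u) := by
    rw [hdecomp u]
    try rfl
  have e2 : erVal F a d0 M t (M.getD (v (Fin.last r) : ℕ) d0) = F (a ∘ s ∘ v) := by
    rw [hdecomp v]
    unfold erVal
    have : (fun q : Fin r => a (M.getD (t q) d0)) = fun q : Fin r => a (s (v q.castSucc)) := by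
      funext q
      rw [ht]; simp only []; rw [hagree q]
      try rfl
    rw [this]
    try rfl
  rw [e1, e2] at hQres
  exact hQres

/-! ### The level-by-level induction -/

lemma level_claim {X : Type*} (k : ℕ) (E : (Fin (k + 3) → X) → Prop)
    (c : ℝ) (hc : 1 ≤ c) (n₀ : ℕ)
    (hbinary : ∀ n : ℕ, n₀ ≤ n → ∀ e : Fin (k + 1) → X, ∀ N : ℕ,
      (n : ℝ) ^ c ≤ (N : ℝ) → ∀ a : Fin N → X,
        ∃ t : Fin n → Fin N, StrictMono t ∧
          IsIndiscernible (fun x : Fin 2 → X =>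
            E fun i => Fin.append x e (Fin.cast (Eq.symm (by omega : 2 + (k + 1) = k + 3)) i))
            (a ∘ t)) :
    ∀ d : ℕ, ∀ hd : (d + 2) + (k + 1 - d) = k + 3,
      ∃ c' : ℝ, c ≤ c' ∧ ∃ n₁ : ℕ, ∀ n : ℕ, n₁ ≤ n → ∀ e : Fin (k + 1 - d) → X, ∀ N : ℕ,
        Twr d ((n : ℝ) ^ c') ≤ (N : ℝ) → ∀ a : Fin N → X,
          ∃ t : Fin n → Fin N, StrictMono t ∧
            IsIndiscernible (fun x : Fin (d + 2) → X =>
              E fun i => Fin.append x e (Fin.cast hd.symm i)) (a ∘ t) := by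
  intro d
  induction d with
  | zero =>
    intro hd
    refine ⟨c, le_rfl, n₀, ?_⟩
    intro n hn e N hN a
    obtain ⟨t, ht, hind⟩ := hbinary n hn e N hN a
    exact ⟨t, ht, hind⟩
  | succ d IHd =>
    intro hd1
    have hdk : d ≤ k := by omega
    have hd : (d + 2) + (k + 1 - d) = k + 3 := by omega
    obtain ⟨c', hcc', n₁, IH⟩ := IHd hd
    have hc'1 : (1:ℝ) ≤ c' := le_trans hc hcc'
    refine ⟨c' * ((2 * (d + 4) + 2 : ℕ) : ℝ), ?_, max n₁ 2, ?_⟩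
    · calc c ≤ c' := hcc'
        _ = c' * 1 := (mul_one c').symm
        _ ≤ c' * ((2 * (d + 4) + 2 : ℕ) : ℝ) := by
            apply mul_le_mul_of_nonneg_left _ (by linarith)
            have h1 : (1:ℕ) ≤ 2 * (d + 4) + 2 := by omega
            exact_mod_cast h1
    intro n hn e N hNT a
    have hn2 : 2 ≤ n := le_trans (le_max_right _ _) hn
    have hn1 : n₁ ≤ n := le_trans (le_max_left _ _) hn
    have hnR : (2:ℝ) ≤ (n:ℝ) := by exact_mod_cast hn2
    set x : ℝ := (n:ℝ) ^ c' with hx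
    have hx2 : 2 ≤ x := by
      calc (2:ℝ) ≤ (n:ℝ) := hnR
        _ = (n:ℝ) ^ (1:ℝ) := (Real.rpow_one _).symm
        _ ≤ (n:ℝ) ^ c' := Real.rpow_le_rpow_of_exponent_le (by linarith) hc'1
    set T : ℝ := Twr d x with hT
    have hT2 : 2 ≤ T := two_le_Twr d hx2
    set m' : ℕ := ⌈T⌉₊ with hm'
    have hTm' : T ≤ (m' : ℝ) := Nat.le_ceil T
    have hm'T : (m' : ℝ) ≤ T + 1 := (Nat.ceil_lt_add_one (by linarith)).le
    have hm'2 : 2 ≤ m' := by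
      have h1 : (2:ℝ) ≤ (m' : ℝ) := le_trans hT2 hTm'
      exact_mod_cast h1
    -- the (d+3)-ary fiber relation
    set F : (Fin ((d+2)+1) → X) → Prop :=
      (fun y : Fin (d + 1 + 2) → X => E fun i => Fin.append y e (Fin.cast hd1.symm i)) with hF
    -- ER bound
    have hbound : (m' + 1) * 2 ^ ((m' + 1) ^ (d+2) * (m' + 1)) ≤ N := by
      obtain ⟨m, hmdef⟩ : ∃ m : ℕ, m = m' + 1 := ⟨m' + 1, rfl⟩
      rw [← hmdef]
      have hm2 : 2 ≤ m := by omega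
      have hmcast : (m : ℝ) = (m' : ℝ) + 1 := by rw [hmdef]; push_cast; ring
      have hmT2 : (m : ℝ) ≤ T + 2 := by rw [hmcast]; linarith
      have hnat : m + m ^ (d+2) * m ≤ m ^ (d+4) := by
        have e1 : m ^ (d+2) * m = m ^ (d+3) := (pow_succ m (d+2)).symm
        have e2 : m ^ (d+4) = m * m ^ (d+3) := by ring
        have e3 : m ≤ m ^ (d+3) := Nat.le_self_pow (by omega) m
        nlinarith
      have hreal : ((m * 2 ^ (m ^ (d+2) * m) : ℕ) : ℝ) ≤ (N : ℝ) := by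
        push_cast
        have s1 : (m:ℝ) * (2:ℝ) ^ (m ^ (d+2) * m : ℕ)
            ≤ (2:ℝ) ^ ((m:ℝ)) * (2:ℝ) ^ (((m ^ (d+2) * m : ℕ) : ℝ)) := by
          rw [Real.rpow_natCast (2:ℝ) (m ^ (d+2) * m)]
          apply mul_le_mul_of_nonneg_right _ (by positivity)
          exact le_two_rpow (by exact_mod_cast (by omega : 1 ≤ m))
        have s2 : (2:ℝ) ^ ((m:ℝ)) * (2:ℝ) ^ (((m ^ (d+2) * m : ℕ) : ℝ))
            = (2:ℝ) ^ ((m:ℝ) + ((m ^ (d+2) * m : ℕ) : ℝ)) := (Real.rpow_add (by norm_num) _ _).symm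
        have s3 : (m:ℝ) + ((m ^ (d+2) * m : ℕ) : ℝ) ≤ (((m ^ (d+4) : ℕ)) : ℝ) := by
          exact_mod_cast hnat
        have s4 : (((m ^ (d+4) : ℕ)) : ℝ) = ((m:ℝ)) ^ (d+4) := by push_cast; ring
        have s5 : ((m:ℝ)) ^ (d+4) ≤ (T + 2) ^ (d+4) :=
          pow_le_pow_left₀ (by positivity) hmT2 _
        have s6 : (T + 2) ^ (d+4) ≤ Twr d (x ^ (2*(d+4)+2)) := Twr_pow_le d (by omega) hx2
        have s7 : (2:ℝ) ^ (Twr d (x ^ (2*(d+4)+2))) ≤ (N:ℝ) := by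
          have ex : x ^ (2*(d+4)+2) = (n:ℝ) ^ (c' * ((2 * (d + 4) + 2 : ℕ) : ℝ)) := by
            rw [hx, Real.rpow_mul (by positivity), Real.rpow_natCast]
          rw [ex]
          exact hNT
        calc (m:ℝ) * (2:ℝ) ^ (m ^ (d+2) * m : ℕ)
            ≤ (2:ℝ) ^ ((m:ℝ) + ((m ^ (d+2) * m : ℕ) : ℝ)) := by rw [← s2]; exact s1
          _ ≤ (2:ℝ) ^ (Twr d (x ^ (2*(d+4)+2))) := by
              apply Real.rpow_le_rpow_of_exponent_le one_le_two
              calc (m:ℝ) + ((m ^ (d+2) * m : ℕ) : ℝ) ≤ (((m ^ (d+4) : ℕ)) : ℝ) := s3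
                _ = ((m:ℝ)) ^ (d+4) := s4
                _ ≤ (T + 2) ^ (d+4) := s5
                _ ≤ Twr d (x ^ (2*(d+4)+2)) := s6
          _ ≤ (N:ℝ) := s7
      exact_mod_cast hreal
    obtain ⟨s, hsmono, hshom⟩ := er_step (r := d+2) (by omega) F (m' + 1) N (by omega) hbound a
    set b : X := a (s (Fin.last m')) with hb
    set e'' : Fin (k - d) → X := fun i => e (Fin.cast (by omega : k - d = k + 1 - (d+1)) i) with he''
    set e' : Fin (k + 1 - d) → X :=
      fun i => (Fin.cons b e'' : Fin ((k - d) + 1) → X) (Fin.cast (by omega : k + 1 - d = (k - d) + 1) i) with he'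
    set a' : Fin m' → X := fun i => a (s i.castSucc) with ha'
    obtain ⟨t, htmono, hind⟩ := IH n hn1 e' m' hTm' a'
    have castSuccMono : ∀ {p : ℕ}, StrictMono (Fin.castSucc : Fin p → Fin (p+1)) := by
      intro p i j hij; simpa using hij
    refine ⟨fun i => s ((t i).castSucc), hsmono.comp (castSuccMono.comp htmono), ?_⟩
    -- bridge between the (d+3)-ary fiber with parameters e and the (d+2)-ary fiber with e'
    have hbridge : ∀ y : Fin (d + 2) → X,
        F (Fin.snoc y b) ↔ (E fun i => Fin.append y e' (Fin.cast hd.symm i)) := by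
      intro y
      have hfun : (fun i => Fin.append (Fin.snoc y b) e (Fin.cast hd1.symm i))
          = (fun i => Fin.append y e' (Fin.cast hd.symm i)) := by
        funext i
        simp only [he', he'', append_apply', snoc_apply', cons_apply', Fin.coe_cast]
        split_ifs <;> try rfl
        all_goals try omega
        all_goals try (apply congrArg; ext; simp; omega)
      simp only [hF]
      exact iff_of_eq (congrArg E hfun)
    have key : ∀ u : Fin ((d+2)+1) → Fin n, StrictMono u →
        (F ((a ∘ fun i => s ((t i).castSucc)) ∘ u) ↔
          E fun i => Fin.append ((a' ∘ t) ∘ (fun j : Fin (d+2) => u j.castSucc)) e'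
            (Fin.cast hd.symm i)) := by
      intro u hu
      set w : Fin ((d+2)+1) → Fin (m'+1) := fun i => (t (u i)).castSucc with hw
      have hwmono : StrictMono w := castSuccMono.comp (htmono.comp hu)
      set w' : Fin ((d+2)+1) → Fin (m'+1) :=
        Fin.snoc (fun i : Fin (d+2) => w i.castSucc) (Fin.last m') with hw'
      have hw'app : ∀ i : Fin ((d+2)+1),
          w' i = if h : (i:ℕ) < d+2 then w ((⟨i, h⟩ : Fin (d+2)).castSucc) else Fin.last m' := by
        intro i; simp only [hw', snoc_apply']
      have hw'mono : StrictMono w' := by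
        intro i j hij
        have hij' : (i:ℕ) < (j:ℕ) := hij
        rw [hw'app i, hw'app j]
        split_ifs with h1 h2 h2
        · apply hwmono; rw [Fin.lt_def]; simpa using hij'
        · simp only [hw]; exact Fin.castSucc_lt_last _
        · omega
        · omega
      have hagree : ∀ i : Fin (d+2), w i.castSucc = w' i.castSucc := by
        intro i; rw [hw', Fin.snoc_castSucc]
      have hiff := hshom w w' hwmono hw'mono (fun i => hagree i)
      have hsnoc_eq : a ∘ s ∘ w' = Fin.snoc (fun i : Fin (d+2) => a' (t (u i.castSucc))) b := by
        funext i
        refine Fin.lastCases ?_ ?_ i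
        · show a (s (w' (Fin.last (d+2))))
            = (Fin.snoc (fun i : Fin (d+2) => a' (t (u i.castSucc))) b : Fin ((d+2)+1) → X)
                (Fin.last (d+2))
          rw [hw', Fin.snoc_last, Fin.snoc_last, hb]
        · intro q
          show a (s (w' q.castSucc))
            = (Fin.snoc (fun i : Fin (d+2) => a' (t (u i.castSucc))) b : Fin ((d+2)+1) → X)
                q.castSucc
          rw [← hagree q, Fin.snoc_castSucc, hw, ha']
      have e1 : F ((a ∘ fun i => s ((t i).castSucc)) ∘ u) = F (a ∘ s ∘ w) := rfl
      rw [e1, hiff, hsnoc_eq]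
      exact hbridge _
    rcases hind with hpos | hneg
    · left
      intro u hu
      exact (key u hu).mpr (hpos (fun j : Fin (d+2) => u j.castSucc) (hu.comp castSuccMono))
    · right
      intro u hu hcon
      exact hneg (fun j : Fin (d+2) => u j.castSucc) (hu.comp castSuccMono)
        ((key u hu).mp hcon)


/-- Tower bound for a `k`-ary relation (arity `k = k₀ + 3`): polynomial trace bounds for all
partial fiber relations (the NIP hypothesis) together with a polynomial Ramsey bound for the
binary fiber relations yield a Ramsey bound of `twr_{k−1}(n^{c'})` for `E`. -/
theorem nip_tower_bound {X : Type*} (k : ℕ) (E : (Fin (k + 3) → X) → Prop)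
    (C₃ C₄ : ℝ) (hC₃ : 1 ≤ C₃) (hC₄ : 1 ≤ C₄)
    (htrace : ∀ j₀ m₀ : ℕ, 2 ≤ j₀ → ∀ hjm : j₀ + 1 + m₀ = k + 3,
      ∀ e : Fin m₀ → X, ∀ D : Finset (Fin j₀ → X),
        (Set.ncard {A : Finset (Fin j₀ → X) | ∃ b : X,
            A = D.filter fun t =>
              E fun i => Fin.append (Fin.snoc t b) e (Fin.cast hjm.symm i)} : ℝ)
          ≤ C₃ * (D.card : ℝ) ^ C₄)
    (c : ℝ) (hc : 1 ≤ c) (n₀ : ℕ)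
    (hbinary : ∀ n : ℕ, n₀ ≤ n → ∀ e : Fin (k + 1) → X, ∀ N : ℕ,
      (n : ℝ) ^ c ≤ (N : ℝ) → ∀ a : Fin N → X,
        ∃ t : Fin n → Fin N, StrictMono t ∧
          IsIndiscernible (fun x : Fin 2 → X =>
            E fun i => Fin.append x e (Fin.cast (by omega : k + 3 = 2 + (k + 1)) i))
            (a ∘ t)) :
    ∃ c' : ℝ, 0 < c' ∧ ∃ n₁ : ℕ, ∀ n : ℕ, n₁ ≤ n → ∀ N : ℕ,
      Twr (k + 1) ((n : ℝ) ^ c') ≤ (N : ℝ) → ∀ a : Fin N → X,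
        ∃ t : Fin n → Fin N, StrictMono t ∧ IsIndiscernible E (a ∘ t) := by
  
  obtain ⟨c', hcc', n₁, H⟩ := level_claim k E c hc n₀ hbinary (k + 1) (by omega)
  refine ⟨c', by linarith, n₁, ?_⟩
  intro n hn N hNT a
  have hz : k + 1 - (k + 1) = 0 := by omega
  set e0 : Fin (k + 1 - (k + 1)) → X := fun i => Fin.elim0 (Fin.cast hz i) with he0
  obtain ⟨t, ht, hind⟩ := H n hn e0 N hNT a
  refine ⟨t, ht, ?_⟩
  have key : ∀ (h : k + 3 = (k + 1 + 2) + (k + 1 - (k + 1))) (x : Fin (k + 1 + 2) → X),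
      (fun i => Fin.append x e0 (Fin.cast h i)) = x := by
    intro h x
    funext i
    rw [append_apply', dif_pos (show ((Fin.cast h i : Fin _) : ℕ) < k + 1 + 2 by
      have h2 := i.isLt; simp only [Fin.coe_cast]; omega)]
    exact congrArg x (by ext; simp)
  rcases hind with h1 | h1
  · left
    intro u hu
    have h2 := h1 u hu
    simp only [] at h2
    rwa [key _ _] at h2
  · right
    intro u hu
    have h2 := h1 u hu
    simp only [] at h2
    rwa [key _ _] at h2
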